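/- Performance Difference Lemma (finite horizon): for any two policies π, π_E in a finite MDP with horizon T and reward r, J(π_E) − J(π) = E_{τ∼π_E}[ ∑_{t=1}^T (Q^π_t(s_t, a_t) − E_{a∼π(s_t)}[Q^π_t(s_t, a)]) ], where J(π) = E_{τ∼π}[∑_{t=1}^T r(s_t,a_t)] and Q^π_t(s,a) = E[∑_{t'=t}^T r(s_{t'},a_{t'}) | s_t=s, a_t=a, subsequent actions from π]. -/

import Mathlib

open scoped BigOperators

/-- Expectation of `g` under a probability mass function `p`. -/
noncomputable def pexp {X : Type*} (p : PMF X) (g : X → ℝ) : ℝ :=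
  ∑' x, (p x).toReal * g x

/-- Distribution over length-`n` trajectories (lists of state-action pairs)
    obtained by rolling out policy `π` under transition kernel `P` from state `s`. -/
noncomputable def trajFrom {S A : Type*} (π : S → PMF A) (P : S → A → PMF S) :
    ℕ → S → PMF (List (S × A))
  | 0, _ => PMF.pure []
  | n + 1, s =>
      (π s).bind fun a => (P s a).bind fun s' =>
        (trajFrom π P n s').map fun rest => (s, a) :: rest

/-- Distribution over horizon-`T` trajectories from initial distribution `init`. -/
noncomputable def traj {S A : Type*} (T : ℕ) (init : PMF S) (π : S → PMF A)
    (P : S → A → PMF S) : PMF (List (S × A)) :=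
  init.bind (trajFrom π P T)

/-- Cumulative reward of a trajectory. -/
def cumRew {S A : Type*} (r : S → A → ℝ) (τ : List (S × A)) : ℝ :=
  (τ.map fun p => r p.1 p.2).sum

/-- Expected cumulative reward `J(π)` over horizon `T`. -/
noncomputable def J {S A : Type*} (T : ℕ) (init : PMF S) (π : S → PMF A)
    (P : S → A → PMF S) (r : S → A → ℝ) : ℝ :=
  pexp (traj T init π P) (cumRew r)

/-- Action-value function: `Qf π P r n s a` is the expected reward accumulated
    over `n` remaining steps, starting by taking `a` in `s`, then following `π`. -/
noncomputable def Qf {S A : Type*} (π : S → PMF A) (P : S → A → PMF S)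
    (r : S → A → ℝ) : ℕ → S → A → ℝ
  | 0, _, _ => 0
  | n + 1, s, a =>
      r s a + pexp (P s a) fun s' => pexp (π s') fun a' => Qf π P r n s' a'

section PDLAux

variable {X Y : Type*}

lemma pexp_eq_sum (p : PMF X) (g : X → ℝ) (s : Finset X) (hs : p.support ⊆ ↑s) :
    pexp p g = ∑ x ∈ s, (p x).toReal * g x := by
  refine tsum_eq_sum ?_
  intro x hx
  have hp : p x = 0 := by
    by_contra h
    exact hx (hs ((p.mem_support_iff x).2 h))
  simp [hp]

lemma sum_pmf_toReal (p : PMF X) (s : Finset X) (hs : p.support ⊆ ↑s) :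
    ∑ x ∈ s, (p x).toReal = 1 := by
  have h2 : (∑ x ∈ s, p x) = 1 := by
    rw [← tsum_eq_sum (L := SummationFilter.unconditional X) (s := s) (f := fun x => p x) ?_]
    · exact p.tsum_coe
    · intro x hx
      by_contra h
      exact hx (hs ((p.mem_support_iff x).2 h))
  calc ∑ x ∈ s, (p x).toReal = (∑ x ∈ s, p x).toReal :=
        (ENNReal.toReal_sum (fun a _ => p.apply_ne_top a)).symm
    _ = 1 := by rw [h2]; simp

lemma pexp_zero (p : PMF X) : pexp p (fun _ => (0 : ℝ)) = 0 := by
  simp [pexp]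

lemma pexp_pure (x : X) (g : X → ℝ) : pexp (PMF.pure x) g = g x := by
  classical
  rw [pexp_eq_sum _ _ {x} (by simp [PMF.support_pure])]
  simp [PMF.pure_apply]

lemma pexp_congr (p : PMF X) {g h : X → ℝ} (H : ∀ x ∈ p.support, g x = h x) :
    pexp p g = pexp p h := by
  refine tsum_congr fun x => ?_
  by_cases hp : p x = 0
  · simp [hp]
  · rw [H x ((p.mem_support_iff x).2 hp)]

lemma pexp_bind (p : PMF X) (f : X → PMF Y) (g : Y → ℝ)
    (sX : Finset X) (hX : p.support ⊆ ↑sX)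
    (sY : Finset Y) (hY : (p.bind f).support ⊆ ↑sY) :
    pexp (p.bind f) g = pexp p (fun x => pexp (f x) g) := by
  have hbind : ∀ y, ((p.bind f) y).toReal
      = ∑ x ∈ sX, (p x).toReal * ((f x) y).toReal := by
    intro y
    rw [PMF.bind_apply]
    rw [tsum_eq_sum (s := sX) (f := fun x => p x * (f x) y) ?_]
    · rw [ENNReal.toReal_sum (fun a _ => ENNReal.mul_ne_top (p.apply_ne_top a) ((f a).apply_ne_top y))]
      simp [ENNReal.toReal_mul]
    · intro x hx
      have hp : p x = 0 := by
        by_contra h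
        exact hx (hX ((p.mem_support_iff x).2 h))
      simp [hp]
  rw [pexp_eq_sum (p.bind f) g sY hY, pexp_eq_sum p _ sX hX]
  simp_rw [hbind, Finset.sum_mul]
  rw [Finset.sum_comm]
  refine Finset.sum_congr rfl (fun x _ => ?_)
  by_cases hp : p x = 0
  · simp [hp]
  · have hsupp : (f x).support ⊆ ↑sY := by
      intro y hy
      exact hY ((PMF.mem_support_bind_iff p f y).2 ⟨x, (p.mem_support_iff x).2 hp, hy⟩)
    rw [pexp_eq_sum (f x) g sY hsupp, Finset.mul_sum]
    refine Finset.sum_congr rfl (fun y _ => by ring)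

lemma pexp_map (p : PMF X) (f : X → Y) (g : Y → ℝ)
    (sX : Finset X) (hX : p.support ⊆ ↑sX) :
    pexp (p.map f) g = pexp p (fun x => g (f x)) := by
  classical
  have hm : p.map f = p.bind (fun x => PMF.pure (f x)) := rfl
  rw [hm, pexp_bind p _ g sX hX (sX.image f) ?_]
  · exact pexp_congr p fun x _ => pexp_pure (f x) g
  · intro y hy
    rcases (PMF.mem_support_bind_iff ..).1 hy with ⟨x, hx, hyx⟩
    have hyfx : y = f x := by simpa [PMF.support_pure] using hyx
    exact Finset.mem_coe.2 (Finset.mem_image.2 ⟨x, Finset.mem_coe.1 (hX hx), hyfx.symm⟩)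

lemma pexp_sub (p : PMF X) (g h : X → ℝ) (s : Finset X) (hs : p.support ⊆ ↑s) :
    pexp p (fun x => g x - h x) = pexp p g - pexp p h := by
  rw [pexp_eq_sum p _ s hs, pexp_eq_sum p g s hs, pexp_eq_sum p h s hs,
    ← Finset.sum_sub_distrib]
  exact Finset.sum_congr rfl fun x _ => by ring

lemma pexp_add_const (p : PMF X) (c : ℝ) (g : X → ℝ) (s : Finset X) (hs : p.support ⊆ ↑s) :
    pexp p (fun x => c + g x) = c + pexp p g := by
  rw [pexp_eq_sum p _ s hs, pexp_eq_sum p g s hs]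
  have h1 := sum_pmf_toReal p s hs
  calc ∑ x ∈ s, (p x).toReal * (c + g x)
      = (∑ x ∈ s, (p x).toReal) * c + ∑ x ∈ s, (p x).toReal * g x := by
        rw [Finset.sum_mul, ← Finset.sum_add_distrib]
        exact Finset.sum_congr rfl fun x _ => by ring
    _ = c + ∑ x ∈ s, (p x).toReal * g x := by rw [h1]; ring

end PDLAux
section PDLMain

variable {S A : Type*} [Fintype S] [Fintype A]

noncomputable def listFinset (S A : Type*) [Fintype S] [Fintype A] (n : ℕ) :
    Finset (List (S × A)) := by
  classical exact (Finset.univ : Finset (Fin n → S × A)).image List.ofFn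

lemma mem_listFinset {n : ℕ} {l : List (S × A)} (hl : l.length = n) :
    l ∈ listFinset S A n := by
  classical
  subst hl
  unfold listFinset
  refine Finset.mem_image.2 ⟨l.get, Finset.mem_univ _, ?_⟩
  · convert List.ofFn_get l

lemma trajFrom_length (π : S → PMF A) (P : S → A → PMF S) :
    ∀ (n : ℕ) (s : S) (τ : List (S × A)), τ ∈ (trajFrom π P n s).support → τ.length = n := by
  intro n
  induction n with
  | zero =>
    intro s τ hτ
    simp only [trajFrom, PMF.support_pure, Set.mem_singleton_iff] at hτ
    simp [hτ]
  | succ n ih =>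
    intro s τ hτ
    simp only [trajFrom] at hτ
    rcases (PMF.mem_support_bind_iff ..).1 hτ with ⟨a, _, hτ⟩
    rcases (PMF.mem_support_bind_iff ..).1 hτ with ⟨s', _, hτ⟩
    rcases (PMF.mem_support_map_iff ..).1 hτ with ⟨rest, hrest, rfl⟩
    simp [ih s' rest hrest]

lemma trajFrom_support_subset (π : S → PMF A) (P : S → A → PMF S) (n : ℕ) (s : S) :
    (trajFrom π P n s).support ⊆ ↑(listFinset S A n) :=
  fun τ hτ => mem_listFinset (trajFrom_length π P n s τ hτ)

lemma inner_support (π : S → PMF A) (P : S → A → PMF S) (n : ℕ) (s : S) (a : A) :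
    ((P s a).bind fun s' => (trajFrom π P n s').map fun rest => (s, a) :: rest).support
      ⊆ ↑(listFinset S A (n + 1)) := by
  intro τ hτ
  rcases (PMF.mem_support_bind_iff ..).1 hτ with ⟨s', _, hτ⟩
  rcases (PMF.mem_support_map_iff ..).1 hτ with ⟨rest, hrest, rfl⟩
  exact mem_listFinset (by simp [trajFrom_length π P n s' rest hrest])

lemma pexp_trajFrom_succ (μ : S → PMF A) (P : S → A → PMF S) (n : ℕ) (s : S)
    (g : List (S × A) → ℝ) :
    pexp (trajFrom μ P (n + 1) s) g
      = pexp (μ s) (fun a => pexp (P s a) (fun s' =>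
          pexp (trajFrom μ P n s') (fun rest => g ((s, a) :: rest)))) := by
  have h1 : trajFrom μ P (n + 1) s
      = (μ s).bind fun a => (P s a).bind fun s' =>
          (trajFrom μ P n s').map fun rest => (s, a) :: rest := rfl
  rw [h1, pexp_bind _ _ _ Finset.univ (by simp) (listFinset S A (n + 1))
        (h1 ▸ trajFrom_support_subset μ P (n + 1) s)]
  refine pexp_congr _ fun a _ => ?_
  rw [pexp_bind _ _ _ Finset.univ (by simp) (listFinset S A (n + 1))
        (inner_support μ P n s a)]
  refine pexp_congr _ fun s' _ => ?_
  exact pexp_map _ _ _ (listFinset S A n) (trajFrom_support_subset μ P n s')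

lemma jfrom_eq (π : S → PMF A) (P : S → A → PMF S) (r : S → A → ℝ) :
    ∀ (n : ℕ) (s : S), pexp (trajFrom π P n s) (cumRew r)
      = pexp (π s) (fun a => Qf π P r n s a) := by
  intro n
  induction n with
  | zero =>
    intro s
    have h0 : trajFrom π P 0 s = PMF.pure [] := rfl
    rw [h0, pexp_pure]
    have : (fun a : A => Qf π P r 0 s a) = fun _ => (0 : ℝ) := rfl
    rw [this, pexp_zero]
    simp [cumRew]
  | succ n ih =>
    intro s
    rw [pexp_trajFrom_succ]
    refine pexp_congr _ fun a _ => ?_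
    have h2 : ∀ s' : S,
        pexp (trajFrom π P n s') (fun rest => cumRew r ((s, a) :: rest))
          = r s a + pexp (π s') (fun a' => Qf π P r n s' a') := by
      intro s'
      have hc : (fun rest => cumRew r ((s, a) :: rest))
          = fun rest : List (S × A) => r s a + cumRew r rest := by
        funext rest; simp [cumRew]
      rw [hc, pexp_add_const _ _ _ (listFinset S A n) (trajFrom_support_subset π P n s'), ih s']
    rw [pexp_congr (P s a) (fun s' _ => h2 s'),
      pexp_add_const (P s a) _ _ Finset.univ (by simp)]
    rfl

end PDLMain
section PDLFinal

variable {S A : Type*} [Fintype S] [Fintype A] [Inhabited S] [Inhabited A]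

lemma pdl_from (π πE : S → PMF A) (P : S → A → PMF S) (r : S → A → ℝ) :
    ∀ (n : ℕ) (s : S),
      pexp (trajFrom πE P n s) (cumRew r) - pexp (π s) (fun a => Qf π P r n s a)
        = pexp (trajFrom πE P n s) (fun τ =>
            ∑ t ∈ Finset.range n,
              (Qf π P r (n - t) (τ.getD t default).1 (τ.getD t default).2 -
                pexp (π (τ.getD t default).1)
                  (fun a => Qf π P r (n - t) (τ.getD t default).1 a))) := by
  intro n
  induction n with
  | zero =>
    intro s
    have h0 : trajFrom πE P 0 s = PMF.pure [] := rfl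
    have hq : (fun a : A => Qf π P r 0 s a) = fun _ => (0 : ℝ) := rfl
    rw [h0, pexp_pure, hq, pexp_zero, pexp_pure]
    simp [cumRew]
  | succ n ih =>
    intro s
    -- abbreviations
    set D : ℕ → S × A → ℝ := fun k p =>
      Qf π P r k p.1 p.2 - pexp (π p.1) (fun a => Qf π P r k p.1 a) with hD
    have hshift : ∀ (a : A) (rest : List (S × A)),
        (∑ t ∈ Finset.range (n + 1),
            D (n + 1 - t) (((s, a) :: rest).getD t default))
          = D (n + 1) (s, a) + ∑ t ∈ Finset.range n, D (n - t) (rest.getD t default) := by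
      intro a rest
      rw [Finset.sum_range_succ' (fun t => D (n + 1 - t) (((s, a) :: rest).getD t default)) n]
      simp [Nat.succ_sub_succ, add_comm]
    -- RHS computation
    rw [pexp_trajFrom_succ (g := fun τ =>
        ∑ t ∈ Finset.range (n + 1), D (n + 1 - t) (τ.getD t default))]
    have hR : ∀ a ∈ (πE s).support,
        pexp (P s a) (fun s' => pexp (trajFrom πE P n s')
            (fun rest => ∑ t ∈ Finset.range (n + 1),
              D (n + 1 - t) (((s, a) :: rest).getD t default)))
          = D (n + 1) (s, a) + pexp (P s a) (fun s' =>
              pexp (trajFrom πE P n s') (cumRew r)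
                - pexp (π s') (fun a' => Qf π P r n s' a')) := by
      intro a _
      have hinner : ∀ s' : S,
          pexp (trajFrom πE P n s')
            (fun rest => ∑ t ∈ Finset.range (n + 1),
              D (n + 1 - t) (((s, a) :: rest).getD t default))
            = D (n + 1) (s, a) +
              (pexp (trajFrom πE P n s') (cumRew r)
                - pexp (π s') (fun a' => Qf π P r n s' a')) := by
        intro s'
        rw [pexp_congr (trajFrom πE P n s') (fun rest _ => hshift a rest),
          pexp_add_const _ _ _ (listFinset S A n) (trajFrom_support_subset πE P n s'),
          ih s']
      rw [pexp_congr (P s a) (fun s' _ => hinner s'),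
        pexp_add_const (P s a) _ _ Finset.univ (by simp)]
    rw [pexp_congr (πE s) hR]
    -- LHS computation
    rw [pexp_trajFrom_succ (g := cumRew r)]
    have hcum : ∀ a ∈ (πE s).support,
        pexp (P s a) (fun s' => pexp (trajFrom πE P n s')
            (fun rest => cumRew r ((s, a) :: rest)))
          = r s a + pexp (P s a) (fun s' => pexp (trajFrom πE P n s') (cumRew r)) := by
      intro a _
      have hc : ∀ s' : S,
          pexp (trajFrom πE P n s') (fun rest => cumRew r ((s, a) :: rest))
            = r s a + pexp (trajFrom πE P n s') (cumRew r) := by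
        intro s'
        have hcc : (fun rest => cumRew r ((s, a) :: rest))
            = fun rest : List (S × A) => r s a + cumRew r rest := by
          funext rest; simp [cumRew]
        rw [hcc, pexp_add_const _ _ _ (listFinset S A n) (trajFrom_support_subset πE P n s')]
      rw [pexp_congr (P s a) (fun s' _ => hc s'),
        pexp_add_const (P s a) _ _ Finset.univ (by simp)]
    rw [pexp_congr (πE s) hcum]
    -- combine: move the constant V(n+1)(s) inside the πE-expectation
    set V : ℝ := pexp (π s) (fun a => Qf π P r (n + 1) s a) with hV
    have hmove : pexp (πE s) (fun a =>
          r s a + pexp (P s a) (fun s' => pexp (trajFrom πE P n s') (cumRew r))) - V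
        = pexp (πE s) (fun a =>
            (r s a + pexp (P s a) (fun s' => pexp (trajFrom πE P n s') (cumRew r))) - V) := by
      rw [pexp_sub (πE s) _ (fun _ => V) Finset.univ (by simp)]
      have : pexp (πE s) (fun _ => V) = V := by
        have := pexp_add_const (πE s) V (fun _ => (0 : ℝ)) Finset.univ (by simp)
        simpa [pexp_zero] using this
      rw [this]
    rw [hmove]
    refine pexp_congr (πE s) fun a _ => ?_
    have hQ : Qf π P r (n + 1) s a
        = r s a + pexp (P s a) (fun s' => pexp (π s') fun a' => Qf π P r n s' a') := rfl
    have hsub : pexp (P s a) (fun s' =>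
          pexp (trajFrom πE P n s') (cumRew r) - pexp (π s') (fun a' => Qf π P r n s' a'))
        = pexp (P s a) (fun s' => pexp (trajFrom πE P n s') (cumRew r))
          - pexp (P s a) (fun s' => pexp (π s') (fun a' => Qf π P r n s' a')) :=
      pexp_sub (P s a) _ _ Finset.univ (by simp)
    rw [hsub, hD]
    simp only [hQ]
    ring

end PDLFinal
theorem performance_difference_lemma {S A : Type*} [Fintype S] [Fintype A]
    [Inhabited S] [Inhabited A]
    (T : ℕ) (hT : 1 ≤ T) (init : PMF S) (P : S → A → PMF S) (r : S → A → ℝ)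
    (π πE : S → PMF A) :
    J T init πE P r - J T init π P r =
      pexp (traj T init πE P) (fun τ =>
        ∑ t ∈ Finset.range T,
          (Qf π P r (T - t) (τ.getD t default).1 (τ.getD t default).2 -
            pexp (π (τ.getD t default).1)
              (fun a => Qf π P r (T - t) (τ.getD t default).1 a))) := by
  have hsub : ∀ μ : S → PMF A,
      (init.bind (trajFrom μ P T)).support ⊆ ↑(listFinset S A T) := by
    intro μ τ hτ
    rcases (PMF.mem_support_bind_iff ..).1 hτ with ⟨s, _, hτ⟩
    exact mem_listFinset (trajFrom_length μ P T s τ hτ)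
  have hJE : J T init πE P r = pexp init (fun s => pexp (trajFrom πE P T s) (cumRew r)) := by
    unfold J traj
    exact pexp_bind init _ _ Finset.univ (by simp) (listFinset S A T) (hsub πE)
  have hJpi : J T init π P r
      = pexp init (fun s => pexp (π s) (fun a => Qf π P r T s a)) := by
    unfold J traj
    rw [pexp_bind init _ _ Finset.univ (by simp) (listFinset S A T) (hsub π)]
    exact pexp_congr init fun s _ => jfrom_eq π P r T s
  rw [hJE, hJpi, ← pexp_sub init _ _ Finset.univ (by simp)]
  rw [pexp_congr init (fun s _ => pdl_from π πE P r T s)]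
  unfold traj
  exact (pexp_bind init _ _ Finset.univ (by simp) (listFinset S A T) (hsub πE)).symm
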